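/- Let A be an n×n non-negative matrix with all entries at most 1 and spectral radius λmax. Then the squared Frobenius norm of A satisfies ‖A‖_F² ≤ (n² + n·λmax)/2. -/

import Mathlib

open Matrix Polynomial Filter
open scoped NNReal ENNReal

attribute [local instance] Matrix.linftyOpNormedRing Matrix.linftyOpNormedAlgebra

namespace FrobeniusAux

variable {n : ℕ}

lemma pow_entry_nonneg (M : Matrix (Fin n) (Fin n) ℝ) (hM : ∀ i j, 0 ≤ M i j) (m : ℕ) :
    ∀ i j, 0 ≤ (M ^ m) i j := by
  induction m with
  | zero =>
    intro i j
    rw [pow_zero, Matrix.one_apply]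
    split <;> norm_num
  | succ m ih =>
    intro i j
    rw [pow_succ, Matrix.mul_apply]
    exact Finset.sum_nonneg fun k _ => mul_nonneg (ih i k) (hM k j)

lemma sum_sqrt_mul_le (x y : Fin n → ℝ) (hx : ∀ k, 0 ≤ x k) (hy : ∀ k, 0 ≤ y k) :
    ∑ k, Real.sqrt (x k) * Real.sqrt (y k) ≤
      Real.sqrt (∑ k, x k) * Real.sqrt (∑ k, y k) := by
  rw [← Real.sqrt_mul (Finset.sum_nonneg fun k _ => hx k)]
  apply (Real.le_sqrt (Finset.sum_nonneg fun k _ =>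
      mul_nonneg (Real.sqrt_nonneg _) (Real.sqrt_nonneg _))
      (mul_nonneg (Finset.sum_nonneg fun k _ => hx k)
        (Finset.sum_nonneg fun k _ => hy k))).mpr
  calc (∑ k, Real.sqrt (x k) * Real.sqrt (y k)) ^ 2
      ≤ (∑ k, Real.sqrt (x k) ^ 2) * (∑ k, Real.sqrt (y k) ^ 2) :=
        Finset.sum_mul_sq_le_sq_mul_sq _ _ _
    _ = (∑ k, x k) * (∑ k, y k) := by
        simp_rw [Real.sq_sqrt (hx _), Real.sq_sqrt (hy _)]

/-- entrywise bound on powers of the geometric-mean symmetrization. -/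
lemma G_pow_le (A : Matrix (Fin n) (Fin n) ℝ) (hA : ∀ i j, 0 ≤ A i j) (m : ℕ) :
    ∀ i j, ((Matrix.of fun i j => Real.sqrt (A i j * A j i)) ^ m) i j ≤
      Real.sqrt ((A ^ m) i j * (A ^ m) j i) := by
  set G : Matrix (Fin n) (Fin n) ℝ := Matrix.of fun i j => Real.sqrt (A i j * A j i) with hG
  induction m with
  | zero =>
    intro i j
    rw [pow_zero, pow_zero, Matrix.one_apply]
    by_cases h : i = j
    · subst h; simp [Matrix.one_apply]
    · simp [Matrix.one_apply, h]
  | succ m ih =>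
    intro i j
    rw [pow_succ, Matrix.mul_apply]
    have step1 : ∀ k ∈ Finset.univ, (G ^ m) i k * G k j ≤
        Real.sqrt ((A ^ m) i k * A k j) * Real.sqrt ((A ^ m) k i * A j k) := by
      intro k _
      have h1 : (G ^ m) i k * G k j ≤
          Real.sqrt ((A ^ m) i k * (A ^ m) k i) * Real.sqrt (A k j * A j k) :=
        mul_le_mul_of_nonneg_right (ih i k) (Real.sqrt_nonneg _)
      refine h1.trans_eq ?_
      rw [← Real.sqrt_mul (mul_nonneg (pow_entry_nonneg A hA m i k) (pow_entry_nonneg A hA m k i)),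
        ← Real.sqrt_mul (mul_nonneg (pow_entry_nonneg A hA m i k) (hA k j))]
      congr 1
      ring
    have hfst : ∑ k, (A ^ m) i k * A k j = (A ^ (m + 1)) i j := by
      rw [pow_succ, Matrix.mul_apply]
    have hsnd : ∑ k, (A ^ m) k i * A j k = (A ^ (m + 1)) j i := by
      rw [pow_succ', Matrix.mul_apply]
      exact Finset.sum_congr rfl fun k _ => mul_comm _ _
    calc ∑ k, (G ^ m) i k * G k j
        ≤ ∑ k, Real.sqrt ((A ^ m) i k * A k j) * Real.sqrt ((A ^ m) k i * A j k) :=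
          Finset.sum_le_sum step1
      _ ≤ Real.sqrt (∑ k, (A ^ m) i k * A k j) * Real.sqrt (∑ k, (A ^ m) k i * A j k) :=
          sum_sqrt_mul_le _ _
            (fun k => mul_nonneg (pow_entry_nonneg A hA m i k) (hA k j))
            (fun k => mul_nonneg (pow_entry_nonneg A hA m k i) (hA j k))
      _ = Real.sqrt ((A ^ (m + 1)) i j) * Real.sqrt ((A ^ (m + 1)) j i) := by
          rw [hfst, hsnd]
      _ = Real.sqrt ((A ^ (m + 1)) i j * (A ^ (m + 1)) j i) :=
          (Real.sqrt_mul (pow_entry_nonneg A hA (m + 1) i j) _).symm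

lemma sq_sum_le (M : Matrix (Fin n) (Fin n) ℝ) (hM : ∀ a b, M a b = M b a) :
    (∑ i, ∑ j, M i j) ^ 2 ≤ (n : ℝ) * ∑ i, ∑ j, (M * M) i j := by
  have key : ∑ i, ∑ j, (M * M) i j = ∑ k, (∑ i, M k i) ^ 2 := by
    simp_rw [Matrix.mul_apply]
    calc ∑ i, ∑ j, ∑ k, M i k * M k j
        = ∑ i, ∑ k, ∑ j, M i k * M k j :=
          Finset.sum_congr rfl fun i _ => Finset.sum_comm
      _ = ∑ k, ∑ i, ∑ j, M i k * M k j := Finset.sum_comm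
      _ = ∑ k, (∑ i, M k i) ^ 2 := by
          refine Finset.sum_congr rfl fun k _ => ?_
          simp_rw [← Finset.mul_sum]
          rw [← Finset.sum_mul, sq]
          congr 1
          exact Finset.sum_congr rfl fun i _ => hM i k
  have cs := Finset.sum_mul_sq_le_sq_mul_sq Finset.univ (fun k => ∑ i, M k i) (fun _ => (1 : ℝ))
  simp only [mul_one, one_pow] at cs
  rw [key]
  calc (∑ i, ∑ j, M i j) ^ 2
      ≤ (∑ k, (∑ i, M k i) ^ 2) * ∑ _k : Fin n, (1 : ℝ) := cs
    _ = (n : ℝ) * ∑ k, (∑ i, M k i) ^ 2 := by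
        simp only [Finset.sum_const, Finset.card_univ, Fintype.card_fin, nsmul_eq_mul, mul_one]
        ring

lemma spectrum_root (B : Matrix (Fin n) (Fin n) ℂ) (z : ℂ) (hz : z ∈ spectrum ℂ B) :
    (Matrix.charpoly B).eval z = 0 := by
  rw [spectrum.mem_iff] at hz
  rw [Matrix.isUnit_iff_isUnit_det, isUnit_iff_ne_zero, not_not] at hz
  rw [Matrix.charpoly, _root_.eval_det, matPolyEquiv_charmatrix]
  simpa [Matrix.scalar, Matrix.algebraMap_eq_diagonal] using hz

end FrobeniusAux

theorem frobenius_bound (n : ℕ) (A : Matrix (Fin n) (Fin n) ℝ)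
    (hA : ∀ i j, 0 ≤ A i j ∧ A i j ≤ 1)
    (lmax : ℝ)
    (hl : ((lmax : ℂ)) ∈ ((A.map Complex.ofReal).charpoly).roots)
    (hlmax : ∀ z ∈ ((A.map Complex.ofReal).charpoly).roots, ‖z‖ ≤ lmax) :
    ∑ i, ∑ j, A i j ^ 2 ≤ (n ^ 2 + n * lmax) / 2 := by
  classical
  rcases Nat.eq_zero_or_pos n with hn | hn
  · subst hn
    simp
  have hn' : (0 : ℝ) < n := by exact_mod_cast hn
  have hA0 : ∀ i j, 0 ≤ A i j := fun i j => (hA i j).1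
  have hA1 : ∀ i j, A i j ≤ 1 := fun i j => (hA i j).2
  have hlmax0 : 0 ≤ lmax := le_trans (norm_nonneg _) (hlmax _ hl)
  set B : Matrix (Fin n) (Fin n) ℂ := A.map Complex.ofReal with hBdef
  set G : Matrix (Fin n) (Fin n) ℝ :=
    Matrix.of (fun i j => Real.sqrt (A i j * A j i)) with hGdef
  have hGapp : ∀ i j, G i j = Real.sqrt (A i j * A j i) := fun i j => rfl
  have hsum1 : ∑ _i : Fin n, ∑ _j : Fin n, (1 : ℝ) = (n : ℝ) ^ 2 := by
    simp only [Finset.sum_const, Finset.card_univ, Fintype.card_fin, nsmul_eq_mul, mul_one]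
    ring
  -- Step 1 : 2 * S ≤ n² + P
  have hswap : ∑ i, ∑ j, A j i ^ 2 = ∑ i, ∑ j, A i j ^ 2 := Finset.sum_comm
  have step1 : 2 * (∑ i, ∑ j, A i j ^ 2) ≤
      (n : ℝ) ^ 2 + ∑ i, ∑ j, A i j * A j i := by
    have e1 : ∑ i, ∑ j, (A i j ^ 2 + A j i ^ 2) = 2 * (∑ i, ∑ j, A i j ^ 2) := by
      simp_rw [Finset.sum_add_distrib]
      rw [hswap]; ring
    have e2 : ∑ i, ∑ j, ((1 : ℝ) + A i j * A j i) =
        (n : ℝ) ^ 2 + ∑ i, ∑ j, A i j * A j i := by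
      simp_rw [Finset.sum_add_distrib]
      rw [hsum1]
    rw [← e1, ← e2]
    refine Finset.sum_le_sum fun i _ => Finset.sum_le_sum fun j _ => ?_
    nlinarith [hA0 i j, hA1 i j, hA0 j i, hA1 j i]
  -- Step 2 : P ≤ T
  have step2 : ∑ i, ∑ j, A i j * A j i ≤ ∑ i, ∑ j, G i j := by
    refine Finset.sum_le_sum fun i _ => Finset.sum_le_sum fun j _ => ?_
    rw [hGapp]
    have hp0 : 0 ≤ A i j * A j i := mul_nonneg (hA0 i j) (hA0 j i)
    have hp1 : A i j * A j i ≤ 1 := by nlinarith [hA0 i j, hA0 j i, hA1 i j, hA1 j i]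
    refine (Real.le_sqrt hp0 hp0).mpr ?_
    nlinarith [hp0, hp1]
  -- the key spectral bound on T
  suffices hT : ∑ i, ∑ j, G i j ≤ (n : ℝ) * lmax by
    push_cast
    linarith [step1, step2, hT]
  by_contra hcon
  push_neg at hcon
  set T : ℝ := ∑ i, ∑ j, G i j with hTdef
  set t : ℝ := T / n with htdef
  have htgt : lmax < t := (lt_div_iff₀ hn').mpr (by linarith [hcon])
  have hT0 : 0 ≤ T :=
    Finset.sum_nonneg fun i _ => Finset.sum_nonneg fun j _ => Real.sqrt_nonneg _
  have ht0 : 0 ≤ t := div_nonneg hT0 hn'.le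
  -- symmetric powers of G
  have hGsym : Gᵀ = G := by
    ext a b
    simp only [Matrix.transpose_apply, hGapp]
    rw [mul_comm]
  have hGm_sym : ∀ m, ∀ a b, (G ^ m) a b = (G ^ m) b a := by
    intro m a b
    have h : (G ^ m)ᵀ = G ^ m := by rw [Matrix.transpose_pow, hGsym]
    conv_lhs => rw [← h]
    simp [Matrix.transpose_apply]
  set u : ℕ → ℝ := fun m => ∑ i, ∑ j, (G ^ m) i j with hu
  have hiter : ∀ m, (u m) ^ 2 ≤ (n : ℝ) * u (m + m) := by
    intro m
    have h := FrobeniusAux.sq_sum_le (G ^ m) (hGm_sym m)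
    rwa [← pow_add] at h
  have hu_nonneg : ∀ m, 0 ≤ u m := by
    intro m
    exact Finset.sum_nonneg fun i _ => Finset.sum_nonneg fun j _ =>
      FrobeniusAux.pow_entry_nonneg G (fun a b => Real.sqrt_nonneg _) m i j
  have hclaim : ∀ k, (n : ℝ) * t ^ (2 ^ k) ≤ u (2 ^ k) := by
    intro k
    induction k with
    | zero =>
      have : (n : ℝ) * t = T := by
        rw [htdef, mul_div_cancel₀ _ hn'.ne']
      simpa [pow_one, this] using le_of_eq (by rw [hTdef, hu]; simp)
    | succ k ih =>
      have h2 : 2 ^ (k + 1) = 2 ^ k + 2 ^ k := by rw [pow_succ, mul_two]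
      have e : (n : ℝ) * t ^ (2 ^ (k + 1)) = ((n : ℝ) * t ^ (2 ^ k)) ^ 2 / n := by
        rw [h2, pow_add]
        field_simp
      rw [e, div_le_iff₀ hn']
      have hsq : ((n : ℝ) * t ^ (2 ^ k)) ^ 2 ≤ (u (2 ^ k)) ^ 2 :=
        pow_le_pow_left₀ (by positivity) ih 2
      calc ((n : ℝ) * t ^ (2 ^ k)) ^ 2 ≤ (u (2 ^ k)) ^ 2 := hsq
        _ ≤ (n : ℝ) * u (2 ^ k + 2 ^ k) := hiter (2 ^ k)
        _ = u (2 ^ (k + 1)) * n := by rw [← h2]; ring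
  -- relating powers of B and A
  have hBpow : ∀ m, B ^ m = (A ^ m).map Complex.ofReal := by
    intro m
    rw [hBdef]
    have : ∀ (M : Matrix (Fin n) (Fin n) ℝ), M.map Complex.ofReal =
        (Complex.ofRealHom : ℝ →+* ℂ).mapMatrix M := fun M => rfl
    rw [this, this, ← map_pow]
  -- norm bound : u m ≤ n * ‖B ^ m‖
  have hnorm : ∀ m, u m ≤ (n : ℝ) * ‖B ^ m‖ := by
    intro m
    have h1 : ∀ i j, (G ^ m) i j ≤ ((A ^ m) i j + (A ^ m) j i) / 2 := by
      intro i j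
      have hgl := FrobeniusAux.G_pow_le A hA0 m i j
      have hp := FrobeniusAux.pow_entry_nonneg A hA0 m i j
      have hq := FrobeniusAux.pow_entry_nonneg A hA0 m j i
      refine hgl.trans ?_
      nlinarith [Real.sq_sqrt (mul_nonneg hp hq), Real.sqrt_nonneg ((A ^ m) i j * (A ^ m) j i),
        sq_nonneg ((A ^ m) i j - (A ^ m) j i)]
    have hswap2 : ∑ i, ∑ j, (A ^ m) j i = ∑ i, ∑ j, (A ^ m) i j := Finset.sum_comm
    have h2 : u m ≤ ∑ i, ∑ j, (A ^ m) i j := by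
      calc u m ≤ ∑ i, ∑ j, ((A ^ m) i j + (A ^ m) j i) / 2 :=
            Finset.sum_le_sum fun i _ => Finset.sum_le_sum fun j _ => h1 i j
        _ = ((∑ i, ∑ j, (A ^ m) i j) + ∑ i, ∑ j, (A ^ m) j i) / 2 := by
            simp_rw [add_div, Finset.sum_add_distrib, ← Finset.sum_div]
        _ = ∑ i, ∑ j, (A ^ m) i j := by
            rw [hswap2]; ring
    have h3 : ∀ i : Fin n, ∑ j, (A ^ m) i j ≤ ‖B ^ m‖ := by
      intro i
      have hval : ∀ j, ‖(B ^ m) i j‖₊ = ((A ^ m) i j).toNNReal := by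
        intro j
        rw [hBpow m]
        ext
        simp only [Matrix.map_apply, coe_nnnorm, Complex.norm_real,
          Real.coe_toNNReal', Real.norm_eq_abs]
        rw [abs_of_nonneg (FrobeniusAux.pow_entry_nonneg A hA0 m i j),
          max_eq_left (FrobeniusAux.pow_entry_nonneg A hA0 m i j)]
      have hle : (∑ j, ‖(B ^ m) i j‖₊ : ℝ≥0) ≤
          Finset.univ.sup fun i => ∑ j, ‖(B ^ m) i j‖₊ :=
        Finset.le_sup (f := fun i => ∑ j, ‖(B ^ m) i j‖₊) (Finset.mem_univ i)
      calc ∑ j, (A ^ m) i j = ((∑ j, ‖(B ^ m) i j‖₊ : ℝ≥0) : ℝ) := by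
            push_cast [hval]
            refine Finset.sum_congr rfl fun j _ => ?_
            rw [Real.coe_toNNReal _ (FrobeniusAux.pow_entry_nonneg A hA0 m i j)]
        _ ≤ _ := by
            rw [Matrix.linfty_opNorm_def]
            exact_mod_cast hle
    calc u m ≤ ∑ i, ∑ j, (A ^ m) i j := h2
      _ ≤ ∑ _i : Fin n, ‖B ^ m‖ := Finset.sum_le_sum fun i _ => h3 i
      _ = (n : ℝ) * ‖B ^ m‖ := by
          simp [Finset.sum_const, Finset.card_univ, nsmul_eq_mul]
  -- spectral radius bound
  haveI : CompleteSpace (Matrix (Fin n) (Fin n) ℂ) :=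
    inferInstance
  have hrad : spectralRadius ℂ B ≤ (lmax.toNNReal : ℝ≥0∞) := by
    unfold spectralRadius
    refine iSup₂_le fun z hz => ?_
    have hroot := FrobeniusAux.spectrum_root B z hz
    have hzroots : z ∈ (Matrix.charpoly B).roots := by
      rw [Polynomial.mem_roots (Matrix.charpoly_monic B).ne_zero]
      exact hroot
    have h1 : ‖z‖ ≤ lmax := by
      exact hlmax z hzroots
    have h2 : ‖z‖₊ ≤ lmax.toNNReal := by
      refine NNReal.coe_le_coe.mp ?_
      rw [coe_nnnorm, Real.coe_toNNReal _ hlmax0]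
      exact h1
    exact_mod_cast ENNReal.coe_le_coe.mpr h2
  have hfreq : ∃ᶠ m : ℕ in atTop,
      (t.toNNReal : ℝ≥0∞) ≤ (‖B ^ m‖₊ : ℝ≥0∞) ^ (1 / (m : ℝ)) := by
    rw [Filter.frequently_atTop]
    intro K
    refine ⟨2 ^ K, (Nat.lt_two_pow_self (n := K)).le, ?_⟩
    set m : ℕ := 2 ^ K with hm
    have hmpos : 0 < m := pow_pos (by norm_num) K
    have htm : t ^ m ≤ ‖B ^ m‖ := by
      have := (hclaim K).trans (hnorm m)
      have h := (mul_le_mul_iff_right₀ hn').mp this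
      exact h
    have hm' : (t.toNNReal : ℝ≥0∞) ^ (m : ℕ) ≤ (‖B ^ m‖₊ : ℝ≥0∞) := by
      rw [← ENNReal.coe_pow]
      refine ENNReal.coe_le_coe.mpr ?_
      refine NNReal.coe_le_coe.mp ?_
      rw [NNReal.coe_pow, Real.coe_toNNReal _ ht0, coe_nnnorm]
      exact htm
    have hmne : (m : ℝ) ≠ 0 := by
      exact_mod_cast hmpos.ne'
    calc (t.toNNReal : ℝ≥0∞)
        = ((t.toNNReal : ℝ≥0∞) ^ (m : ℕ)) ^ (1 / (m : ℝ)) := by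
          rw [← ENNReal.rpow_natCast, ← ENNReal.rpow_mul, mul_one_div_cancel hmne,
            ENNReal.rpow_one]
      _ ≤ (‖B ^ m‖₊ : ℝ≥0∞) ^ (1 / (m : ℝ)) :=
          ENNReal.rpow_le_rpow hm' (by positivity)
  have hlim := spectrum.limsup_pow_nnnorm_pow_one_div_le_spectralRadius B
  have hfinal : (t.toNNReal : ℝ≥0∞) ≤ (lmax.toNNReal : ℝ≥0∞) :=
    (Filter.le_limsup_of_frequently_le' hfreq).trans (hlim.trans hrad)
  rw [ENNReal.coe_le_coe] at hfinal
  have : t ≤ lmax := by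
    have h := NNReal.coe_le_coe.mpr hfinal
    rwa [Real.coe_toNNReal _ ht0, Real.coe_toNNReal _ hlmax0] at h
  linarith
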